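/- Let X be an R^d-valued random variable with E[X] = g, E[‖X−g‖^p] ≤ σ^p for p ∈ (1,2], σ ≥ 0, and let D be a random symmetric positive definite matrix (possibly dependent on X) with m·I ⪯ D ⪯ M·I for deterministic 0 < m ≤ M. Suppose ‖g‖ < τ/(2M) and define X̂ = min{1, τ/‖D X‖}·X. Then ‖E[X̂] − g‖ ≤ (M^p/(m·2^{1−p}))·σ^p·τ^{1−p}. -/

import Mathlib

open MeasureTheory Matrix
open scoped ENNReal NNReal
open scoped InnerProductSpace

lemma eig_bounds {A : Matrix (Fin d) (Fin d) ℝ} {m M : ℝ} (hH : A.IsHermitian)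
    (hlow : (A - m • (1 : Matrix (Fin d) (Fin d) ℝ)).PosSemidef)
    (hup : ((M • (1 : Matrix (Fin d) (Fin d) ℝ)) - A).PosSemidef) (j : Fin d) :
    m ≤ hH.eigenvalues j ∧ hH.eigenvalues j ≤ M := by
  set b := hH.eigenvectorBasis with hb
  set u : Fin d → ℝ := ⇑(b j) with hu
  have huu : dotProduct u u = 1 := by
    have h1 : ⟪b j, b j⟫_ℝ = 1 := by
      rw [real_inner_self_eq_norm_sq, b.orthonormal.1 j]; norm_num
    rw [← h1]; simp only [PiLp.inner_apply, dotProduct, u, RCLike.inner_apply, conj_trivial, mul_comm]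
  have hAu : A *ᵥ u = hH.eigenvalues j • u := hH.mulVec_eigenvectorBasis j
  constructor
  · have := hlow.dotProduct_mulVec_nonneg u
    simp only [sub_mulVec, smul_mulVec, one_mulVec, hAu, star_trivial,
      dotProduct_sub, dotProduct_smul, smul_eq_mul, huu] at this
    linarith
  · have := hup.dotProduct_mulVec_nonneg u
    simp only [sub_mulVec, smul_mulVec, one_mulVec, hAu, star_trivial,
      dotProduct_sub, dotProduct_smul, smul_eq_mul, huu] at this
    linarith

lemma norm_toEuclideanLin_bounds {A : Matrix (Fin d) (Fin d) ℝ} {m M : ℝ} (hm : 0 ≤ m)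
    (hmM : m ≤ M) (hH : A.IsHermitian)
    (hlow : (A - m • (1 : Matrix (Fin d) (Fin d) ℝ)).PosSemidef)
    (hup : ((M • (1 : Matrix (Fin d) (Fin d) ℝ)) - A).PosSemidef)
    (v : EuclideanSpace ℝ (Fin d)) :
    m * ‖v‖ ≤ ‖Matrix.toEuclideanLin A v‖ ∧ ‖Matrix.toEuclideanLin A v‖ ≤ M * ‖v‖ := by
  set b := hH.eigenvectorBasis with hb
  set lam := hH.eigenvalues with hlam
  set T := Matrix.toEuclideanLin A with hT
  have hM0 : 0 ≤ M := hm.trans hmM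
  have hTb : ∀ i, T (b i) = lam i • b i := by
    intro i
    have h1 := hH.mulVec_eigenvectorBasis i
    have := congrArg (WithLp.equiv 2 (Fin d → ℝ)).symm h1
    rw [hT, Matrix.toEuclideanLin_apply, h1]; rfl
  have hrep : ∀ i, b.repr (T v) i = lam i * b.repr v i := by
    intro i
    have hS := (Matrix.isHermitian_iff_isSymmetric.mp hH) (b i) v
    rw [b.repr_apply_apply, b.repr_apply_apply, ← hS, hTb i,
      real_inner_smul_left]
  have hnorm : ∀ w : EuclideanSpace ℝ (Fin d),
      ‖w‖ = Real.sqrt (∑ i, (b.repr w i)^2) := by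
    intro w
    rw [← b.repr.norm_map w, EuclideanSpace.norm_eq]
    congr 1
    refine Finset.sum_congr rfl fun i _ => ?_
    rw [Real.norm_eq_abs, sq_abs]
  have heig := fun i => eig_bounds hH hlow hup i
  have hTv : ‖T v‖ = Real.sqrt (∑ i, (lam i * b.repr v i)^2) := by
    rw [hnorm (T v)]
    congr 1
    exact Finset.sum_congr rfl fun i _ => by rw [hrep i]
  constructor
  · rw [hTv, hnorm v, ← Real.sqrt_sq hm, ← Real.sqrt_mul (sq_nonneg m),
      Finset.mul_sum]
    apply Real.sqrt_le_sqrt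
    refine Finset.sum_le_sum fun i _ => ?_
    rw [mul_pow]
    have h := (heig i).1
    simp only [← hlam] at h
    have : m^2 ≤ (lam i)^2 := by nlinarith
    nlinarith [sq_nonneg (b.repr v i)]
  · rw [hTv, hnorm v, ← Real.sqrt_sq hM0, ← Real.sqrt_mul (sq_nonneg M),
      Finset.mul_sum]
    apply Real.sqrt_le_sqrt
    refine Finset.sum_le_sum fun i _ => ?_
    rw [mul_pow]
    have h1 := (heig i).1
    have h2 := (heig i).2
    simp only [← hlam] at h1 h2
    have hsq : lam i^2 ≤ M^2 := pow_le_pow_left₀ (hm.trans h1) h2 2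
    exact mul_le_mul_of_nonneg_right hsq (sq_nonneg _)



/-- Bias bound for preconditioning-then-clipping. -/
theorem precond_clip_bias_bound
    {Ω : Type*} [m0 : MeasurableSpace Ω] (μ : Measure Ω) [IsProbabilityMeasure μ]
    (d : ℕ) (p σ τ m M : ℝ) (hp1 : 1 < p) (hp2 : p ≤ 2) (hσ : 0 ≤ σ) (hτ : 0 < τ)
    (hm : 0 < m) (hmM : m ≤ M)
    (X : Ω → EuclideanSpace ℝ (Fin d))
    (hXmeas : AEStronglyMeasurable X μ) (hXint : Integrable X μ)
    (g : EuclideanSpace ℝ (Fin d)) (hmean : ∫ ω, X ω ∂μ = g)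
    (hmom : ∫⁻ ω, (‖X ω - g‖₊ : ℝ≥0∞) ^ p ∂μ ≤ ENNReal.ofReal (σ ^ p))
    (D : Ω → Matrix (Fin d) (Fin d) ℝ)
    (hDpos : ∀ ω, (D ω).PosDef)
    (hDlow : ∀ ω, (D ω - m • (1 : Matrix (Fin d) (Fin d) ℝ)).PosSemidef)
    (hDup : ∀ ω, ((M • (1 : Matrix (Fin d) (Fin d) ℝ)) - D ω).PosSemidef)
    (hg : ‖g‖ < τ / (2 * M))
    (Xhat : Ω → EuclideanSpace ℝ (Fin d))
    (hXhat : ∀ ω, Xhat ω = min 1 (τ / ‖Matrix.toEuclideanLin (D ω) (X ω)‖) • X ω)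
    (hXhatmeas : AEStronglyMeasurable Xhat μ) :
    ‖(∫ ω, Xhat ω ∂μ) - g‖ ≤ (M ^ p / (m * 2 ^ (1 - p))) * σ ^ p * τ ^ (1 - p) := by
  have hMpos : 0 < M := lt_of_lt_of_le hm hmM
  have hpm1 : 0 < p - 1 := by linarith
  have hp0 : 0 < p := by linarith
  have hτp : 0 < τ ^ (p - 1) := Real.rpow_pos_of_pos hτ _
  have h2p : (0:ℝ) < 2 ^ (p - 1) := Real.rpow_pos_of_pos (by norm_num) _
  set C : ℝ := M ^ p * 2 ^ (p - 1) / (m * τ ^ (p - 1)) with hC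
  have hC0 : 0 ≤ C := by
    apply div_nonneg
    · exact mul_nonneg (Real.rpow_nonneg hMpos.le _) h2p.le
    · exact mul_nonneg hm.le hτp.le
  have hMg : M * ‖g‖ < τ / 2 := by
    have h := (mul_lt_mul_iff_right₀ hMpos).mpr hg
    have heq : M * (τ / (2 * M)) = τ / 2 := by field_simp
    linarith
  -- pointwise key bound
  have key : ∀ ω, ‖Xhat ω - X ω‖ ≤ C * ‖X ω - g‖ ^ p := by
    intro ω
    have hbx := norm_toEuclideanLin_bounds hm.le hmM (hDpos ω).1 (hDlow ω) (hDup ω) (X ω)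
    have hbxg := norm_toEuclideanLin_bounds hm.le hmM (hDpos ω).1 (hDlow ω) (hDup ω) (X ω - g)
    have hbg := norm_toEuclideanLin_bounds hm.le hmM (hDpos ω).1 (hDlow ω) (hDup ω) g
    set nDv := ‖Matrix.toEuclideanLin (D ω) (X ω)‖ with hnDv
    set w := ‖Matrix.toEuclideanLin (D ω) (X ω - g)‖ with hw
    have hRHS : 0 ≤ C * ‖X ω - g‖ ^ p :=
      mul_nonneg hC0 (Real.rpow_nonneg (norm_nonneg _) _)
    rcases le_or_gt nDv τ with hle | hgt
    · -- no clipping (or X ω = 0)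
      rcases eq_or_ne (X ω) 0 with hx0 | hx0
      · rw [hx0] at hRHS ⊢
        rw [hXhat ω, hx0, smul_zero, sub_zero, norm_zero]; exact hRHS
      · have hxpos : 0 < ‖X ω‖ := norm_pos_iff.mpr hx0
        have hnDvpos : 0 < nDv := lt_of_lt_of_le (mul_pos hm hxpos) hbx.1
        have hmin : min 1 (τ / nDv) = 1 := min_eq_left (by
          rw [le_div_iff₀ hnDvpos]; linarith)
        rw [hXhat ω, ← hnDv, hmin, one_smul, sub_self, norm_zero]; exact hRHS
    · -- clipping case
      have hnDvpos : 0 < nDv := lt_trans hτ hgt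
      have hmin : min 1 (τ / nDv) = τ / nDv := min_eq_right (by
        rw [div_le_one hnDvpos]; exact hgt.le)
      have hnXhat : ‖Xhat ω - X ω‖ = (1 - τ / nDv) * ‖X ω‖ := by
        have hsm : (τ / nDv) • X ω - X ω = (τ / nDv - 1) • X ω := by
          rw [sub_smul, one_smul]
        rw [hXhat ω, ← hnDv, hmin, hsm, norm_smul, Real.norm_eq_abs,
          abs_of_nonpos (by
            have : τ / nDv ≤ 1 := by rw [div_le_one hnDvpos]; exact hgt.le
            linarith)]
        ring
      -- w bounds
      have hwub : w ≤ M * ‖X ω - g‖ := hbxg.2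
      have hwlb : nDv - τ / 2 ≤ w := by
        have htri := norm_sub_norm_le (Matrix.toEuclideanLin (D ω) (X ω))
          (Matrix.toEuclideanLin (D ω) g)
        rw [← map_sub, ← hnDv, ← hw] at htri
        have hgb : ‖Matrix.toEuclideanLin (D ω) g‖ ≤ M * ‖g‖ := hbg.2
        linarith
      have hwpos : τ / 2 < w := by linarith
      have hw0 : 0 ≤ w := le_trans (by linarith) hwpos.le
      -- step 1 : ‖Xhat - X‖ ≤ (nDv - τ)/m
      have step1 : ‖Xhat ω - X ω‖ ≤ (nDv - τ) / m := by
        rw [hnXhat]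
        have hxle : ‖X ω‖ ≤ nDv / m := by
          rw [le_div_iff₀ hm]; rw [mul_comm]; exact hbx.1
        have h1c : 0 ≤ 1 - τ / nDv := by
          have : τ / nDv ≤ 1 := by rw [div_le_one hnDvpos]; exact hgt.le
          linarith
        calc (1 - τ / nDv) * ‖X ω‖ ≤ (1 - τ / nDv) * (nDv / m) :=
              mul_le_mul_of_nonneg_left hxle h1c
        _ = (nDv - τ) / m := by field_simp
      -- step 2 : (nDv - τ)/m ≤ w/m
      have step2 : (nDv - τ) / m ≤ w / m := by gcongr; linarith
      -- step 3 : w ≤ 2^(p-1) * w^p / τ^(p-1)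
      have hwp : w ^ (p - 1) * w = w ^ p := by
        nth_rewrite 2 [← Real.rpow_one w]
        rw [← Real.rpow_add (lt_of_le_of_lt (by positivity) hwpos)]
        ring_nf
      have step3 : w ≤ 2 ^ (p - 1) * w ^ p / τ ^ (p - 1) := by
        rw [le_div_iff₀ hτp]
        have h2w : τ ^ (p - 1) ≤ (2 * w) ^ (p - 1) :=
          Real.rpow_le_rpow hτ.le (by linarith) hpm1.le
        have h2w' : (2 * w) ^ (p - 1) = 2 ^ (p - 1) * w ^ (p - 1) :=
          Real.mul_rpow (by norm_num) hw0
        calc w * τ ^ (p - 1) ≤ w * (2 ^ (p - 1) * w ^ (p - 1)) := by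
              apply mul_le_mul_of_nonneg_left _ hw0
              rw [← h2w']; exact h2w
        _ = 2 ^ (p - 1) * w ^ p := by rw [← hwp]; ring
      -- step 4 : w^p ≤ M^p * ‖X ω - g‖^p
      have step4 : w ^ p ≤ M ^ p * ‖X ω - g‖ ^ p := by
        have := Real.rpow_le_rpow hw0 hwub hp0.le
        rwa [Real.mul_rpow hMpos.le (norm_nonneg _)] at this
      calc ‖Xhat ω - X ω‖ ≤ (nDv - τ) / m := step1
      _ ≤ w / m := step2
      _ ≤ (2 ^ (p - 1) * w ^ p / τ ^ (p - 1)) / m := by gcongr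
      _ ≤ (2 ^ (p - 1) * (M ^ p * ‖X ω - g‖ ^ p) / τ ^ (p - 1)) / m := by
          gcongr
      _ = C * ‖X ω - g‖ ^ p := by rw [hC]; field_simp
  -- integrability of Xhat
  have hXhatint : Integrable Xhat μ := by
    apply hXint.mono hXhatmeas
    filter_upwards with ω
    rw [hXhat ω, norm_smul, Real.norm_eq_abs]
    have h0 : 0 ≤ min 1 (τ / ‖Matrix.toEuclideanLin (D ω) (X ω)‖) :=
      le_min one_pos.le (div_nonneg hτ.le (norm_nonneg _))
    have h1 : min 1 (τ / ‖Matrix.toEuclideanLin (D ω) (X ω)‖) ≤ 1 := min_le_left _ _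
    calc |min 1 (τ / ‖Matrix.toEuclideanLin (D ω) (X ω)‖)| * ‖X ω‖
        ≤ 1 * ‖X ω‖ := by
          apply mul_le_mul_of_nonneg_right _ (norm_nonneg _)
          rw [abs_of_nonneg h0]; exact h1
    _ = ‖X ω‖ := one_mul _
  -- integral manipulations
  have hsub : (∫ ω, Xhat ω ∂μ) - g = ∫ ω, (Xhat ω - X ω) ∂μ := by
    rw [integral_sub hXhatint hXint, hmean]
  rw [hsub]
  have hint_norm : ‖∫ ω, (Xhat ω - X ω) ∂μ‖ ≤ ∫ ω, ‖Xhat ω - X ω‖ ∂μ :=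
    norm_integral_le_integral_norm _
  have hlin : ∫ ω, ‖Xhat ω - X ω‖ ∂μ
      = (∫⁻ ω, (‖Xhat ω - X ω‖₊ : ℝ≥0∞) ∂μ).toReal :=
    integral_norm_eq_lintegral_enorm (hXhatmeas.sub hXmeas)
  have hlbound : ∫⁻ ω, (‖Xhat ω - X ω‖₊ : ℝ≥0∞) ∂μ
      ≤ ENNReal.ofReal C * ENNReal.ofReal (σ ^ p) := by
    calc ∫⁻ ω, (‖Xhat ω - X ω‖₊ : ℝ≥0∞) ∂μ
        ≤ ∫⁻ ω, ENNReal.ofReal C * (‖X ω - g‖₊ : ℝ≥0∞) ^ p ∂μ := by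
          apply lintegral_mono
          intro ω
          dsimp only
          have h2 : (‖X ω - g‖₊ : ℝ≥0∞) ^ p = ENNReal.ofReal (‖X ω - g‖ ^ p) := by
            rw [← enorm_eq_nnnorm, ← ofReal_norm,
              ENNReal.ofReal_rpow_of_nonneg (norm_nonneg _) hp0.le]
          rw [← enorm_eq_nnnorm, ← ofReal_norm, h2, ← ENNReal.ofReal_mul hC0]
          exact ENNReal.ofReal_le_ofReal (key ω)
    _ = ENNReal.ofReal C * ∫⁻ ω, (‖X ω - g‖₊ : ℝ≥0∞) ^ p ∂μ :=
          lintegral_const_mul' _ _ ENNReal.ofReal_ne_top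
    _ ≤ ENNReal.ofReal C * ENNReal.ofReal (σ ^ p) := by
          exact mul_le_mul_right hmom _
  have hfinal : ∫ ω, ‖Xhat ω - X ω‖ ∂μ ≤ C * σ ^ p := by
    rw [hlin]
    rw [← ENNReal.ofReal_mul hC0] at hlbound
    exact ENNReal.toReal_le_of_le_ofReal
      (mul_nonneg hC0 (Real.rpow_nonneg hσ _)) hlbound
  refine le_trans (hint_norm.trans hfinal) (le_of_eq ?_)
  rw [hC, show (1 - p) = -(p - 1) by ring, Real.rpow_neg (by norm_num : (0:ℝ) ≤ 2),
    Real.rpow_neg hτ.le]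
  field_simp
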